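/- Let (X,S) be a non-degenerate involutive solution. For every x ∈ X, S(x, T^{-1}(x)) = (x, T^{-1}(x)) and S(T(x), x) = (T(x), x), where T(x)=f_x^{-1}(x) and T^{-1}(x)=g_x^{-1}(x). -/

import Mathlib

/-- For a non-degenerate involutive solution `S(x,y)=(g_x(y),f_y(x))`,
for every `x ∈ X` one has `S(x, T⁻¹(x)) = (x, T⁻¹(x))` and `S(T(x), x) = (T(x), x)`,
where `T(x) = f_x⁻¹(x)` and `T⁻¹(x) = g_x⁻¹(x)`. -/
theorem stmt_4 {X : Type*} [Fintype X] (g f : X → Equiv.Perm X)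
    (invol : ∀ x y : X, (g (g x y) (f y x), f (f y x) (g x y)) = (x, y)) :
    ∀ x : X,
      (g x ((g x)⁻¹ x), f ((g x)⁻¹ x) x) = (x, (g x)⁻¹ x) ∧
      (g ((f x)⁻¹ x) x, f x ((f x)⁻¹ x)) = ((f x)⁻¹ x, x) := by
  intro x
  constructor
  · set y := (g x)⁻¹ x with hy
    have hgy : g x y = x := Equiv.apply_symm_apply (g x) x
    have h := invol x y
    rw [hgy] at h
    have h1 : g x (f y x) = x := congrArg Prod.fst h
    have hf : f y x = y := by
      have := congrArg ⇑(g x)⁻¹ h1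
      simpa [hy] using this
    simp [hgy, hf]
  · set a := (f x)⁻¹ x with ha
    have hfa : f x a = x := Equiv.apply_symm_apply (f x) x
    have h := invol a x
    rw [hfa] at h
    have h2 : f x (g a x) = x := congrArg Prod.snd h
    have hg : g a x = a := by
      have := congrArg ⇑(f x)⁻¹ h2
      simpa [ha] using this
    simp [hfa, hg]
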